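/- Let 0 < k ≤ n and let c ∈ R = [0,k] × [0,n]. Suppose p₁, …, p_l are points of R, all above and to the right of c (i.e., each pᵢ − c has nonnegative coordinates), all distinct from c, with angles γ₁ ≤ γ₂ ≤ ⋯ ≤ γ_l (γᵢ the angle of segment cpᵢ with the x-axis), and suppose for each i the distance from p_{i+1} to the line through c and pᵢ (and symmetrically) is at least 1 and |cpᵢ| ≥ 1. Then l − 1 ≤ ∫_{γ₁}^{γ_l} d(o, θ, R) dθ, where o = (0,0). -/

import Mathlib

open Real Metric

/-- The axis-aligned rectangle `[0,k] × [0,n]` as a subset of the Euclidean plane. -/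
def rect (k n : ℝ) : Set (EuclideanSpace ℝ (Fin 2)) :=
  {p | p 0 ∈ Set.Icc 0 k ∧ p 1 ∈ Set.Icc 0 n}

/-- The unit vector of angle `θ`. -/
noncomputable def dir (θ : ℝ) : EuclideanSpace ℝ (Fin 2) := WithLp.toLp 2 ![Real.cos θ, Real.sin θ]

/-- The distance from `c` to the boundary of the rectangle `[0,k] × [0,n]` along
the ray from `c` in direction `(cos θ, sin θ)`. -/
noncomputable def rayDist (c : EuclideanSpace ℝ (Fin 2)) (θ k n : ℝ) : ℝ :=
  sSup {t : ℝ | 0 ≤ t ∧ (c + t • dir θ) ∈ rect k n}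

/-- Explicit formula for `rayDist 0`. -/
noncomputable def gfun (k n θ : ℝ) : ℝ :=
  if k * Real.sin θ ≤ n * Real.cos θ then k / Real.cos θ else n / Real.sin θ

lemma gfun_nonneg {k n θ : ℝ} (hk : 0 ≤ k) (hn : 0 ≤ n)
    (hc : 0 ≤ Real.cos θ) (hs : 0 ≤ Real.sin θ) : 0 ≤ gfun k n θ := by
  unfold gfun; split_ifs <;> positivity

lemma cos_pos_of_branch {k n θ : ℝ} (hk : 0 < k) (hkn : k ≤ n)
    (hc : 0 ≤ Real.cos θ) (hs : 0 ≤ Real.sin θ)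
    (h : k * Real.sin θ ≤ n * Real.cos θ) : 0 < Real.cos θ := by
  rcases hc.lt_or_eq with h' | h'
  · exact h'
  · exfalso
    have hpyth := Real.sin_sq_add_cos_sq θ
    have hns : n * Real.cos θ = 0 := by rw [← h']; ring
    have h1 : Real.sin θ ≤ 0 := by nlinarith
    have h2 : Real.sin θ = 0 := le_antisymm h1 hs
    rw [h2, ← h'] at hpyth
    norm_num at hpyth

lemma sin_pos_of_branch {k n θ : ℝ} (hk : 0 < k) (hkn : k ≤ n)
    (hc : 0 ≤ Real.cos θ) (hs : 0 ≤ Real.sin θ)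
    (h : ¬ k * Real.sin θ ≤ n * Real.cos θ) : 0 < Real.sin θ := by
  push_neg at h
  rcases hs.lt_or_eq with h' | h'
  · exact h'
  · exfalso; nlinarith [mul_nonneg (le_of_lt (lt_of_lt_of_le hk hkn)) hc]

lemma gfun_mul_cos_le {k n θ : ℝ} (hk : 0 < k) (hkn : k ≤ n)
    (hc : 0 ≤ Real.cos θ) (hs : 0 ≤ Real.sin θ) :
    gfun k n θ * Real.cos θ ≤ k := by
  unfold gfun
  split_ifs with h
  · have hcpos := cos_pos_of_branch hk hkn hc hs h
    rw [div_mul_cancel₀ _ hcpos.ne']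
  · have hspos := sin_pos_of_branch hk hkn hc hs h
    push_neg at h
    rw [div_mul_eq_mul_div, div_le_iff₀ hspos]
    nlinarith

lemma gfun_mul_sin_le {k n θ : ℝ} (hk : 0 < k) (hkn : k ≤ n)
    (hc : 0 ≤ Real.cos θ) (hs : 0 ≤ Real.sin θ) :
    gfun k n θ * Real.sin θ ≤ n := by
  unfold gfun
  split_ifs with h
  · have hcpos := cos_pos_of_branch hk hkn hc hs h
    rw [div_mul_eq_mul_div, div_le_iff₀ hcpos]
    nlinarith
  · have hspos := sin_pos_of_branch hk hkn hc hs h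
    rw [div_mul_cancel₀ _ hspos.ne']

lemma le_gfun {k n θ t : ℝ} (hk : 0 < k) (hkn : k ≤ n)
    (hc : 0 ≤ Real.cos θ) (hs : 0 ≤ Real.sin θ)
    (h1 : t * Real.cos θ ≤ k) (h2 : t * Real.sin θ ≤ n) : t ≤ gfun k n θ := by
  unfold gfun
  split_ifs with h
  · have hcpos := cos_pos_of_branch hk hkn hc hs h
    rw [le_div_iff₀ hcpos]; exact h1
  · have hspos := sin_pos_of_branch hk hkn hc hs h
    rw [le_div_iff₀ hspos]; exact h2

lemma gfun_le {k n θ : ℝ} (hk : 0 < k) (hkn : k ≤ n)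
    (hc : 0 ≤ Real.cos θ) (hs : 0 ≤ Real.sin θ) :
    gfun k n θ ≤ 2 * n := by
  have hn : 0 < n := lt_of_lt_of_le hk hkn
  have hpyth := Real.sin_sq_add_cos_sq θ
  unfold gfun
  split_ifs with h
  · have hcpos := cos_pos_of_branch hk hkn hc hs h
    rw [div_le_iff₀ hcpos]
    rcases le_or_gt (1/2 : ℝ) (Real.cos θ) with hcase | hcase
    · nlinarith
    · have hsin : (1/2 : ℝ) < Real.sin θ := by nlinarith
      nlinarith
  · have hspos := sin_pos_of_branch hk hkn hc hs h
    push_neg at h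
    rw [div_le_iff₀ hspos]
    rcases le_or_gt (1/2 : ℝ) (Real.sin θ) with hcase | hcase
    · nlinarith
    · have hcos : (1/2 : ℝ) < Real.cos θ := by nlinarith
      nlinarith

lemma ray_set_eq {k n θ : ℝ} (hk : 0 < k) (hkn : k ≤ n)
    (hθ : θ ∈ Set.Icc 0 (π / 2)) :
    {t : ℝ | 0 ≤ t ∧ ((0 : EuclideanSpace ℝ (Fin 2)) + t • dir θ) ∈ rect k n}
      = Set.Icc 0 (gfun k n θ) := by
  have hc : 0 ≤ Real.cos θ := Real.cos_nonneg_of_mem_Icc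
    ⟨by linarith [hθ.1, Real.pi_pos], hθ.2⟩
  have hs : 0 ≤ Real.sin θ := Real.sin_nonneg_of_nonneg_of_le_pi hθ.1
    (by linarith [hθ.2, Real.pi_pos])
  ext t
  simp only [Set.mem_setOf_eq, rect, dir, Set.mem_Icc, PiLp.add_apply, PiLp.smul_apply,
    PiLp.toLp_apply, Matrix.cons_val_zero, Matrix.cons_val_one, Matrix.head_cons, smul_eq_mul,
    PiLp.zero_apply, zero_add]
  constructor
  · rintro ⟨ht, ⟨_, h1⟩, ⟨_, h2⟩⟩
    exact ⟨ht, le_gfun hk hkn hc hs h1 h2⟩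
  · rintro ⟨ht, htg⟩
    refine ⟨ht, ⟨mul_nonneg ht hc, ?_⟩, ⟨mul_nonneg ht hs, ?_⟩⟩
    · calc t * Real.cos θ ≤ gfun k n θ * Real.cos θ := by
            exact mul_le_mul_of_nonneg_right htg hc
        _ ≤ k := gfun_mul_cos_le hk hkn hc hs
    · calc t * Real.sin θ ≤ gfun k n θ * Real.sin θ := by
            exact mul_le_mul_of_nonneg_right htg hs
        _ ≤ n := gfun_mul_sin_le hk hkn hc hs

lemma rayDist_eq_gfun {k n θ : ℝ} (hk : 0 < k) (hkn : k ≤ n)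
    (hθ : θ ∈ Set.Icc 0 (π / 2)) :
    rayDist 0 θ k n = gfun k n θ := by
  have hc : 0 ≤ Real.cos θ := Real.cos_nonneg_of_mem_Icc
    ⟨by linarith [hθ.1, Real.pi_pos], hθ.2⟩
  have hs : 0 ≤ Real.sin θ := Real.sin_nonneg_of_nonneg_of_le_pi hθ.1
    (by linarith [hθ.2, Real.pi_pos])
  rw [rayDist, ray_set_eq hk hkn hθ,
    csSup_Icc (gfun_nonneg hk.le (hk.trans_le hkn).le hc hs)]

lemma gfun_measurable (k n : ℝ) : Measurable (gfun k n) := by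
  unfold gfun
  refine Measurable.ite ?_ ?_ ?_
  · exact measurableSet_le (by fun_prop) (by fun_prop)
  · exact measurable_const.div Real.measurable_cos
  · exact measurable_const.div Real.measurable_sin

lemma gfun_intervalIntegrable {k n a b : ℝ} (hk : 0 < k) (hkn : k ≤ n)
    (ha : a ∈ Set.Icc 0 (π / 2)) (hb : b ∈ Set.Icc 0 (π / 2)) :
    IntervalIntegrable (gfun k n) MeasureTheory.volume a b := by
  rw [intervalIntegrable_iff]
  refine MeasureTheory.Measure.integrableOn_of_bounded (M := 2 * n)
    (by exact measure_Ioc_lt_top.ne)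
    (gfun_measurable k n).aestronglyMeasurable ?_
  have hsub : Set.uIoc a b ⊆ Set.Icc 0 (π / 2) := by
    refine subset_trans Set.Ioc_subset_Icc_self ?_
    apply Set.Icc_subset_Icc
    · exact le_min ha.1 hb.1
    · exact max_le ha.2 hb.2
  refine (MeasureTheory.ae_restrict_iff' measurableSet_uIoc).2 (Filter.Eventually.of_forall ?_)
  intro x hx
  have hxm := hsub hx
  have hc : 0 ≤ Real.cos x := Real.cos_nonneg_of_mem_Icc
    ⟨by linarith [hxm.1, Real.pi_pos], hxm.2⟩
  have hs : 0 ≤ Real.sin x := Real.sin_nonneg_of_nonneg_of_le_pi hxm.1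
    (by linarith [hxm.2, Real.pi_pos])
  rw [Real.norm_eq_abs, abs_of_nonneg (gfun_nonneg hk.le (hk.trans_le hkn).le hc hs)]
  exact gfun_le hk hkn hc hs

lemma dist_dir_formula (c : EuclideanSpace ℝ (Fin 2)) (s a b : ℝ) :
    dist (c + s • dir b) (c + (s * Real.cos (b - a)) • dir a)
      = |s| * |Real.sin (b - a)| := by
  rw [EuclideanSpace.dist_eq]
  have key : ∑ i : Fin 2, dist ((c + s • dir b) i) ((c + (s * Real.cos (b - a)) • dir a) i) ^ 2
      = (|s| * |Real.sin (b - a)|) ^ 2 := by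
    simp only [Fin.sum_univ_two, PiLp.add_apply, PiLp.smul_apply, dir,
      PiLp.toLp_apply, Matrix.cons_val_zero, Matrix.cons_val_one, Matrix.head_cons, smul_eq_mul,
      Real.dist_eq]
    rw [sq_abs, sq_abs, mul_pow, sq_abs, sq_abs]
    rw [Real.cos_sub, Real.sin_sub]
    have ha := Real.sin_sq_add_cos_sq a
    linear_combination (s^2 * ((Real.cos b * Real.cos a + Real.sin b * Real.sin a)^2
      - Real.cos b^2 - Real.sin b^2)) * ha
  rw [key, Real.sqrt_sq (by positivity)]

theorem stmt_9 (k n : ℝ) (hk : 0 < k) (hkn : k ≤ n)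
    (c : EuclideanSpace ℝ (Fin 2)) (hc : c ∈ rect k n)
    (l : ℕ) (hl : 1 ≤ l)
    (p : ℕ → EuclideanSpace ℝ (Fin 2)) (γ r : ℕ → ℝ)
    (hpR : ∀ i, i < l → p i ∈ rect k n)
    (hpne : ∀ i, i < l → p i ≠ c)
    (hquad : ∀ i, i < l → 0 ≤ p i 0 - c 0 ∧ 0 ≤ p i 1 - c 1)
    (hγ : ∀ i, i < l →
      p i = c + r i • dir (γ i))
    (hγrange : ∀ i, i < l → γ i ∈ Set.Icc 0 (π / 2))
    (hγmono : ∀ i j, i ≤ j → j < l → γ i ≤ γ j)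
    (hr1 : ∀ i, i < l → 1 ≤ dist c (p i))
    (hfs : ∀ i, i + 1 < l →
      1 ≤ infDist (p (i + 1))
            (affineSpan ℝ ({c, p i} : Set (EuclideanSpace ℝ (Fin 2))) : Set (EuclideanSpace ℝ (Fin 2))) ∧
      1 ≤ infDist (p i)
            (affineSpan ℝ ({c, p (i + 1)} : Set (EuclideanSpace ℝ (Fin 2))) : Set (EuclideanSpace ℝ (Fin 2)))) :
    (l : ℝ) - 1 ≤ ∫ θ in (γ 0)..(γ (l - 1)), rayDist 0 θ k n := by
  have hcosr : ∀ i, i < l → 0 ≤ Real.cos (γ i) := fun i hi =>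
    Real.cos_nonneg_of_mem_Icc ⟨by linarith [(hγrange i hi).1, Real.pi_pos], (hγrange i hi).2⟩
  have hsinr : ∀ i, i < l → 0 ≤ Real.sin (γ i) := fun i hi =>
    Real.sin_nonneg_of_nonneg_of_le_pi (hγrange i hi).1
      (by linarith [(hγrange i hi).2, Real.pi_pos])
  have hdirnorm : ∀ θ, ‖dir θ‖ = 1 := by
    intro θ
    rw [EuclideanSpace.norm_eq]
    simp only [dir, Fin.sum_univ_two, PiLp.toLp_apply, Matrix.cons_val_zero, Matrix.cons_val_one,
      Matrix.head_cons, Real.norm_eq_abs, sq_abs]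
    rw [Real.cos_sq_add_sin_sq, Real.sqrt_one]
  have hcoord0 : ∀ i, i < l → p i 0 - c 0 = r i * Real.cos (γ i) := by
    intro i hi
    rw [hγ i hi]
    simp [dir]
  have hcoord1 : ∀ i, i < l → p i 1 - c 1 = r i * Real.sin (γ i) := by
    intro i hi
    rw [hγ i hi]
    simp [dir]
  have hrge : ∀ i, i < l → 1 ≤ r i := by
    intro i hi
    have hpc : p i - c = r i • dir (γ i) := by rw [hγ i hi]; abel
    have hd : dist c (p i) = |r i| := by
      rw [dist_comm, dist_eq_norm, hpc, norm_smul, hdirnorm, Real.norm_eq_abs, mul_one]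
    have habs : 1 ≤ |r i| := hd ▸ hr1 i hi
    have hq1 := (hquad i hi).1
    have hq2 := (hquad i hi).2
    rw [hcoord0 i hi] at hq1
    rw [hcoord1 i hi] at hq2
    have hpyth := Real.sin_sq_add_cos_sq (γ i)
    have hr0 : 0 ≤ r i := by
      nlinarith [mul_nonneg hq1 (hcosr i hi), mul_nonneg hq2 (hsinr i hi)]
    calc (1:ℝ) ≤ |r i| := habs
      _ = r i := abs_of_nonneg hr0
  -- the key per-interval estimate
  have key : ∀ i, i + 1 < l → 1 ≤ ∫ θ in γ i..γ (i+1), gfun k n θ := by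
    intro i hi1
    have hi : i < l := by omega
    have hgi := hγrange i hi
    have hgi1 := hγrange (i+1) hi1
    have hmono : γ i ≤ γ (i+1) := hγmono i (i+1) (by omega) hi1
    have hΔ0 : (0:ℝ) ≤ γ (i+1) - γ i := by linarith
    have hΔpi : γ (i+1) - γ i ≤ π := by linarith [hgi.1, hgi1.2, Real.pi_pos]
    have hsinΔ : 0 ≤ Real.sin (γ (i+1) - γ i) :=
      Real.sin_nonneg_of_nonneg_of_le_pi hΔ0 hΔpi
    have hri : 1 ≤ r i := hrge i hi
    have hri1 : 1 ≤ r (i+1) := hrge (i+1) hi1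
    -- first feature-size bound : 1 ≤ r (i+1) * sin Δ
    have hb1 : 1 ≤ r (i+1) * Real.sin (γ (i+1) - γ i) := by
      have hq : (AffineMap.lineMap c (p i)) (r (i+1) * Real.cos (γ (i+1) - γ i) / r i)
          = c + (r (i+1) * Real.cos (γ (i+1) - γ i)) • dir (γ i) := by
        rw [AffineMap.lineMap_apply, hγ i hi]
        simp only [vsub_eq_sub, vadd_eq_add, add_sub_cancel_left, smul_smul]
        rw [add_comm]
        congr 2
        field_simp
      have hmem := AffineMap.lineMap_mem_affineSpan_pair
        (r (i+1) * Real.cos (γ (i+1) - γ i) / r i) c (p i)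
      have hle := infDist_le_dist_of_mem (x := p (i+1)) hmem
      rw [hq] at hle
      have hdist : dist (p (i+1)) (c + (r (i+1) * Real.cos (γ (i+1) - γ i)) • dir (γ i))
          = r (i+1) * Real.sin (γ (i+1) - γ i) := by
        rw [hγ (i+1) hi1, dist_dir_formula c (r (i+1)) (γ i) (γ (i+1)),
          abs_of_nonneg (by linarith : (0:ℝ) ≤ r (i+1)), abs_of_nonneg hsinΔ]
      rw [hdist] at hle
      exact le_trans (hfs i hi1).1 hle
    -- second feature-size bound : 1 ≤ r i * sin Δ
    have hb2 : 1 ≤ r i * Real.sin (γ (i+1) - γ i) := by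
      have hq : (AffineMap.lineMap c (p (i+1))) (r i * Real.cos (γ (i+1) - γ i) / r (i+1))
          = c + (r i * Real.cos (γ (i+1) - γ i)) • dir (γ (i+1)) := by
        rw [AffineMap.lineMap_apply, hγ (i+1) hi1]
        simp only [vsub_eq_sub, vadd_eq_add, add_sub_cancel_left, smul_smul]
        rw [add_comm]
        congr 2
        field_simp
      have hmem := AffineMap.lineMap_mem_affineSpan_pair
        (r i * Real.cos (γ (i+1) - γ i) / r (i+1)) c (p (i+1))
      have hle := infDist_le_dist_of_mem (x := p i) hmem
      rw [hq] at hle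
      have hdist : dist (p i) (c + (r i * Real.cos (γ (i+1) - γ i)) • dir (γ (i+1)))
          = r i * Real.sin (γ (i+1) - γ i) := by
        have hform := dist_dir_formula c (r i) (γ (i+1)) (γ i)
        rw [show γ i - γ (i+1) = -(γ (i+1) - γ i) by ring, Real.cos_neg, Real.sin_neg,
          abs_neg] at hform
        rw [hγ i hi, hform,
          abs_of_nonneg (by linarith : (0:ℝ) ≤ r i), abs_of_nonneg hsinΔ]
      rw [hdist] at hle
      exact le_trans (hfs i hi1).2 hle
    -- pointwise lower bound for gfun on the interval
    have hglb : ∀ θ ∈ Set.Icc (γ i) (γ (i+1)), min (r i) (r (i+1)) ≤ gfun k n θ := by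
      intro θ hθ
      have hθI : θ ∈ Set.Icc 0 (π/2) := ⟨le_trans hgi.1 hθ.1, le_trans hθ.2 hgi1.2⟩
      have hc' : 0 ≤ Real.cos θ := Real.cos_nonneg_of_mem_Icc
        ⟨by linarith [hθI.1, Real.pi_pos], hθI.2⟩
      have hs' : 0 ≤ Real.sin θ := Real.sin_nonneg_of_nonneg_of_le_pi hθI.1
        (by linarith [hθI.2, Real.pi_pos])
      apply le_gfun hk hkn hc' hs'
      · have h1 : Real.cos θ ≤ Real.cos (γ i) :=
          Real.cos_le_cos_of_nonneg_of_le_pi hgi.1 (by linarith [hθI.2, Real.pi_pos]) hθ.1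
        have h2 : r i * Real.cos (γ i) ≤ k := by
          have h3 := (hpR i hi).1.2
          have h4 := hc.1.1
          have h5 := hcoord0 i hi
          linarith
        calc min (r i) (r (i+1)) * Real.cos θ
            ≤ r i * Real.cos (γ i) :=
              mul_le_mul (min_le_left _ _) h1 hc' (by linarith)
          _ ≤ k := h2
      · have h1 : Real.sin θ ≤ Real.sin (γ (i+1)) :=
          Real.sin_le_sin_of_le_of_le_pi_div_two (by linarith [hθI.1, Real.pi_pos]) hgi1.2 hθ.2
        have h2 : r (i+1) * Real.sin (γ (i+1)) ≤ n := by
          have h3 := (hpR (i+1) hi1).2.2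
          have h4 := hc.2.1
          have h5 := hcoord1 (i+1) hi1
          linarith
        calc min (r i) (r (i+1)) * Real.sin θ
            ≤ r (i+1) * Real.sin (γ (i+1)) :=
              mul_le_mul (min_le_right _ _) h1 hs' (by linarith)
          _ ≤ n := h2
    have hii : IntervalIntegrable (gfun k n) MeasureTheory.volume (γ i) (γ (i+1)) :=
      gfun_intervalIntegrable hk hkn hgi hgi1
    have hmono' := intervalIntegral.integral_mono_on hmono
      (intervalIntegrable_const) hii hglb
    rw [intervalIntegral.integral_const, smul_eq_mul] at hmono'
    have hsinle : Real.sin (γ (i+1) - γ i) ≤ γ (i+1) - γ i := Real.sin_le hΔ0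
    have hmin : 1 ≤ (γ (i+1) - γ i) * min (r i) (r (i+1)) := by
      rcases min_cases (r i) (r (i+1)) with ⟨h,_⟩|⟨h,_⟩ <;> rw [h] <;>
        nlinarith [hb1, hb2, hsinle, hri, hri1, hsinΔ]
    linarith
  -- assemble
  have h0l : 0 < l := hl
  have hl1 : l - 1 < l := by omega
  have hab : γ 0 ≤ γ (l-1) := hγmono 0 (l-1) (Nat.zero_le _) hl1
  have hcongr : (∫ θ in (γ 0)..(γ (l - 1)), rayDist 0 θ k n)
      = ∫ θ in (γ 0)..(γ (l - 1)), gfun k n θ := by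
    apply intervalIntegral.integral_congr
    intro θ hθ
    rw [Set.uIcc_of_le hab] at hθ
    exact rayDist_eq_gfun hk hkn
      ⟨le_trans (hγrange 0 h0l).1 hθ.1, le_trans hθ.2 (hγrange (l-1) hl1).2⟩
  have hint : ∀ j, j < l - 1 →
      IntervalIntegrable (gfun k n) MeasureTheory.volume (γ j) (γ (j+1)) := by
    intro j hj
    exact gfun_intervalIntegrable hk hkn (hγrange j (by omega)) (hγrange (j+1) (by omega))
  have hsum := intervalIntegral.sum_integral_adjacent_intervals (μ := MeasureTheory.volume)
    (a := γ) (n := l - 1) hint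
  rw [hcongr, ← hsum]
  have hcast : (l : ℝ) - 1 = ((l - 1 : ℕ) : ℝ) := by
    rw [Nat.cast_sub hl]; norm_num
  rw [hcast]
  calc ((l - 1 : ℕ) : ℝ) = ∑ _j ∈ Finset.range (l - 1), (1:ℝ) := by simp
    _ ≤ ∑ j ∈ Finset.range (l - 1), ∫ θ in γ j..γ (j+1), gfun k n θ := by
        apply Finset.sum_le_sum
        intro j hj
        have := Finset.mem_range.mp hj
        exact key j (by omega)
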